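/- If two generalized priority structures (q, ≿, t) and (q, ≿, t′) are both within-tier acyclic, then for every preference profile R, the sets of Nash equilibrium outcomes of the TDA mechanisms under t and under t′ coincide and both equal the set of stable matchings of (q, ≿, R). -/

import Mathlib

set_option linter.unusedSectionVars false

namespace SchoolChoice

/-- A strict preference over `S ∪ {self}`, encoded by an injective ranking function on
`Option S`; `none` denotes being unmatched (the student himself), and a smaller rank
means more preferred. Injective rankings on a finite set are exactly strict linear orders. -/
structure Pref (S : Type) where
  rank : Option S → ℕ
  inj : Function.Injective rank

/-- Quotas together with strict priorities of the schools: `prank s` ranks the students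
at school `s`, a smaller rank meaning higher priority. -/
structure Prio (I S : Type) where
  quota : S → ℕ
  prank : S → I → ℕ
  inj : ∀ s, Function.Injective (prank s)

variable {I S : Type} [Fintype I] [Fintype S] [DecidableEq I] [DecidableEq S]

/-- `i` has strictly higher priority than `j` at school `s`. -/
def Prio.higher (E : Prio I S) (s : S) (i j : I) : Prop :=
  E.prank s i < E.prank s j

/-- A matching assigns to each student a school or himself (`none`). -/
abbrev Matching (I S : Type) := I → Option S

/-- The set of students assigned to school `s`. -/
def assigned (μ : Matching I S) (s : S) : Finset I :=
  Finset.univ.filter (fun i => μ i = some s)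

/-- Quotas are respected. -/
def Feasible (E : Prio I S) (μ : Matching I S) : Prop :=
  ∀ s, (assigned μ s).card ≤ E.quota s

/-- `(i, s)` is a blocking pair of `μ` with respect to preferences `R`:
`i` strictly prefers `s` to his assignment, and either `s` has an empty seat
(wastefulness) or some student assigned to `s` has lower priority than `i`
(justified envy). -/
def Blocks (E : Prio I S) (R : I → Pref S) (μ : Matching I S) (i : I) (s : S) : Prop :=
  (R i).rank (some s) < (R i).rank (μ i) ∧
    ((assigned μ s).card < E.quota s ∨ ∃ j, μ j = some s ∧ E.higher s i j)

/-- Individual rationality: every student weakly prefers his assignment to being unmatched. -/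
def IndivRat (R : I → Pref S) (μ : Matching I S) : Prop :=
  ∀ i, (R i).rank (μ i) ≤ (R i).rank none

/-- Non-wastefulness: no student prefers a school with an empty seat to his assignment. -/
def NonWasteful (E : Prio I S) (R : I → Pref S) (μ : Matching I S) : Prop :=
  ∀ i s, (R i).rank (some s) < (R i).rank (μ i) → E.quota s ≤ (assigned μ s).card

/-- Stability: feasible, individually rational, and no blocking pair
(no justified envy and non-wasteful). -/
def Stable (E : Prio I S) (R : I → Pref S) (μ : Matching I S) : Prop :=
  Feasible E μ ∧ IndivRat R μ ∧ ∀ i s, ¬ Blocks E R μ i s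

/-- The student-optimal stable matching for the (reported) preferences. -/
def StudentOptimal (E : Prio I S) (R : I → Pref S) (μ : Matching I S) : Prop :=
  Stable E R μ ∧ ∀ ν, Stable E R ν → ∀ i, (R i).rank (μ i) ≤ (R i).rank (ν i)

open Classical in
/-- The student-proposing deferred acceptance mechanism: by the Gale–Shapley theorem its
outcome is the (unique) student-optimal stable matching of the reported preferences. -/
noncomputable def DA (E : Prio I S) (R : I → Pref S) : Matching I S :=
  if h : ∃ μ, StudentOptimal E R μ then h.choose else fun _ => none

/-- A strict upper bound for the values of a ranking. -/
noncomputable def bnd (p : Pref S) : ℕ := (Finset.univ.sup p.rank) + 1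

lemma rank_lt_bnd (p : Pref S) (x : Option S) : p.rank x < bnd p :=
  Nat.lt_succ_of_le (Finset.le_sup (Finset.mem_univ x))

private lemma mul_add_lt {a K B r : ℕ} (ha : a ≤ K) (hr : r < B) :
    a * B + r < (K + 1) * B := by
  calc a * B + r < a * B + B := by omega
    _ = (a + 1) * B := by ring
    _ ≤ (K + 1) * B := Nat.mul_le_mul (by omega) le_rfl

/-- Is an alternative "inside the market" `A`?  `none` always is. -/
def goodB (A : S → Prop) [DecidablePred A] : Option S → Bool
  | none => true
  | some s => decide (A s)

/-- The preference truncated to the set of schools `A`: schools in `A` (and the outside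
option `none`) keep their relative order, while all schools outside `A` are pushed below
`none` (become unacceptable), keeping their relative order among themselves. -/
noncomputable def trunc (A : S → Prop) [DecidablePred A] (p : Pref S) : Pref S where
  rank x := (if goodB A x then 0 else bnd p) + p.rank x
  inj := by
    intro x y h
    by_cases hx : goodB A x <;> by_cases hy : goodB A y <;>
      simp only [hx, hy, if_true, if_false, Bool.false_eq_true, zero_add] at h
    · exact p.inj h
    · have := rank_lt_bnd p x; omega
    · have := rank_lt_bnd p y; omega
    · exact p.inj (by omega)

/-- The reshuffled preference with respect to a tier structure `t`: acceptable schools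
are grouped by tier in increasing tier order (keeping the original relative order within
each tier) above `none`, and all unacceptable schools are placed below `none`. -/
noncomputable def reshuffle (t : S → ℕ) (p : Pref S) : Pref S where
  rank x :=
    Option.elim x ((Finset.univ.sup t + 1) * bnd p)
      (fun s =>
        if p.rank (some s) < p.rank none then t s * bnd p + p.rank (some s)
        else (Finset.univ.sup t + 1) * bnd p + 1 + p.rank (some s))
  inj := by
    have hB : ∀ x, p.rank x < bnd p := rank_lt_bnd p
    have hK : ∀ s : S, t s ≤ Finset.univ.sup t := fun s => Finset.le_sup (Finset.mem_univ s)
    intro x y h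
    rcases x with _ | s <;> rcases y with _ | s' <;>
      simp only [Option.elim_none, Option.elim_some] at h
    · rfl
    · by_cases hy : p.rank (some s') < p.rank none <;> simp only [hy, if_true, if_false] at h
      · have := mul_add_lt (hK s') (hB (some s')); omega
      · omega
    · by_cases hx : p.rank (some s) < p.rank none <;> simp only [hx, if_true, if_false] at h
      · have := mul_add_lt (hK s) (hB (some s)); omega
      · omega
    · by_cases hx : p.rank (some s) < p.rank none <;>
        by_cases hy : p.rank (some s') < p.rank none <;>
        simp only [hx, hy, if_true, if_false] at h
      · have hts : t s = t s' := by
          rcases Nat.lt_trichotomy (t s) (t s') with h1 | h1 | h1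
          · have h2 : t s * bnd p + p.rank (some s) < t s' * bnd p + p.rank (some s') := by
              have h3 := mul_add_lt (a := t s) (K := t s' - 1) (B := bnd p) (by omega) (hB (some s))
              have h4 : (t s' - 1 + 1) * bnd p = t s' * bnd p := by congr 1; omega
              omega
            omega
          · exact h1
          · have h2 : t s' * bnd p + p.rank (some s') < t s * bnd p + p.rank (some s) := by
              have h3 := mul_add_lt (a := t s') (K := t s - 1) (B := bnd p) (by omega) (hB (some s'))
              have h4 : (t s - 1 + 1) * bnd p = t s * bnd p := by congr 1; omega
              omega
            omega
        rw [hts] at h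
        exact p.inj (by omega)
      · have := mul_add_lt (hK s) (hB (some s)); omega
      · have := mul_add_lt (hK s') (hB (some s')); omega
      · exact p.inj (by omega)

/-- A tier structure assigning each school a tier in `{1, …, T}`, each tier nonempty. -/
def IsTierStructure (t : S → ℕ) (T : ℕ) : Prop :=
  (∀ s, 1 ≤ t s ∧ t s ≤ T) ∧ ∀ k, 1 ≤ k → k ≤ T → ∃ s, t s = k

/-- Rounds `1, …, k` of the tiered deferred acceptance mechanism: in round `k` the
students left unmatched so far participate in the DA mechanism with their preferences
truncated to the tier-`k` schools (already matched students participate with nothing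
acceptable); students matched in earlier rounds keep their assignments. -/
noncomputable def TDAaux (E : Prio I S) (t : S → ℕ) (Q : I → Pref S) : ℕ → Matching I S
  | 0 => fun _ => none
  | k + 1 => fun i =>
      match TDAaux E t Q k i with
      | some s => some s
      | none =>
          DA E (fun j =>
            if TDAaux E t Q k j = none then trunc (fun s => t s = k + 1) (Q j)
            else trunc (fun _ => False) (Q j)) i

/-- The tiered deferred acceptance mechanism under tier structure `t`. -/
noncomputable def TDA (E : Prio I S) (t : S → ℕ) (Q : I → Pref S) : Matching I S :=
  TDAaux E t Q (Finset.univ.sup t)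

/-- `Q` is a (pure) Nash equilibrium of the preference revelation game induced by the
mechanism `f` when the true preferences are `R`: no student can obtain a school he truly
strictly prefers by unilaterally changing his report. -/
def NashEq (R : I → Pref S) (f : (I → Pref S) → Matching I S) (Q : I → Pref S) : Prop :=
  ∀ (i : I) (Qi' : Pref S),
    (R i).rank (f Q i) ≤ (R i).rank (f (Function.update Q i Qi') i)

/-- `μ` is a Nash equilibrium outcome of the revelation game induced by `f` at true
preferences `R`. -/
def NashOutcome (R : I → Pref S) (f : (I → Pref S) → Matching I S) (μ : Matching I S) : Prop :=
  ∃ Q, NashEq R f Q ∧ f Q = μ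

/-- The preference `p` is aligned with the tier structure `t`: a (weakly) more preferred
school always lies in a weakly earlier tier. -/
def AlignedPref (t : S → ℕ) (p : Pref S) : Prop :=
  ∀ s s' : S, p.rank (some s) ≤ p.rank (some s') → t s ≤ t s'

/-- `p` lists exactly the school in `o` (if any) as acceptable. -/
def OnlyAcceptable (p : Pref S) (o : Option S) : Prop :=
  ∀ s : S, (p.rank (some s) < p.rank none ↔ o = some s)

/-- An Ergin cycle of the priority structure among the schools in `A`. -/
def Cycle (E : Prio I S) (A : S → Prop) : Prop :=
  ∃ a b : S, A a ∧ A b ∧ a ≠ b ∧ ∃ i j k : I,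
    E.higher a i j ∧ E.higher a j k ∧ E.higher b k i ∧
    ∃ Ia Ib : Finset I, Disjoint Ia Ib ∧
      (∀ l ∈ Ia, l ≠ i ∧ l ≠ j ∧ l ≠ k ∧ E.higher a l j) ∧
      (∀ l ∈ Ib, l ≠ i ∧ l ≠ j ∧ l ≠ k ∧ E.higher b l i) ∧
      Ia.card = E.quota a - 1 ∧ Ib.card = E.quota b - 1

/-- Within-tier acyclicity of a generalized priority structure: no Ergin cycle among the
schools of any single tier. -/
def WithinTierAcyclic (E : Prio I S) (t : S → ℕ) : Prop :=
  ∀ k : ℕ, ¬ Cycle E (fun s => t s = k)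

/-- The (strict) preference `pr` of school `s` over sets of students is a responsive
extension of its priorities. -/
def Responsive (E : Prio I S) (s : S) (pr : Finset I → Finset I → Prop) : Prop :=
  ∀ (J : Finset I) (i j : I), i ∉ J → j ∉ J → E.higher s i j →
    pr (insert i J) (insert j J)

/-- `t` is a refinement of `t'`: `t'` ranks `a` in a strictly later tier than `b` only
if `t` does. -/
def Refines (t t' : S → ℕ) : Prop :=
  ∀ a b : S, t' b < t' a → t b < t a


/-! ### Auxiliary development: an explicit deferred-acceptance algorithm -/

section DAalg

variable (E : Prio I S)

/-- Nothing is acceptable. -/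
def Unacc (p : Pref S) : Prop := ∀ s : S, p.rank none < p.rank (some s)

lemma stable_unacc_none {P : I → Pref S} {ν : Matching I S} (hν : Stable E P ν) {j : I}
    (hu : Unacc (P j)) : ν j = none := by
  cases hj : ν j with
  | none => rfl
  | some s =>
    have h1 := hν.2.1 j
    rw [hj] at h1
    exact absurd h1 (not_le.2 (hu s))

lemma stable_matched_acc {P : I → Pref S} {ν : Matching I S} (hν : Stable E P ν) {j : I} {s : S}
    (hj : ν j = some s) : (P j).rank (some s) < (P j).rank none := by
  have h1 := hν.2.1 j
  rw [hj] at h1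
  rcases lt_or_eq_of_le h1 with h | h
  · exact h
  · exact absurd ((P j).inj h) (by simp)

/-- The most preferred element of a finite menu. -/
noncomputable def best (p : Pref S) (D : Finset (Option S)) : Option S :=
  if h : D.Nonempty then (D.exists_min_image p.rank h).choose else none

lemma best_mem (p : Pref S) {D : Finset (Option S)} (h : D.Nonempty) : best p D ∈ D := by
  rw [best, dif_pos h]
  exact (D.exists_min_image p.rank h).choose_spec.1

lemma best_min (p : Pref S) {D : Finset (Option S)} (h : D.Nonempty) {x : Option S}
    (hx : x ∈ D) : p.rank (best p D) ≤ p.rank x := by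
  rw [best, dif_pos h]
  exact (D.exists_min_image p.rank h).choose_spec.2 x hx

variable (P : I → Pref S)

/-- The proposal of student `i` given the current menus `D`. -/
noncomputable def dprop (D : I → Finset (Option S)) (i : I) : Option S := best (P i) (D i)

/-- The set of students proposing to school `s`. -/
noncomputable def dpool (D : I → Finset (Option S)) (s : S) : Finset I :=
  Finset.univ.filter (fun i => dprop P D i = some s)

/-- Number of members of `X` with higher `s`-priority than `j`. -/
def beats (s : S) (X : Finset I) (j : I) : ℕ :=
  (X.filter (fun k => E.prank s k < E.prank s j)).card

lemma beats_mono {s : S} {X : Finset I} {j k : I} (h : E.prank s j ≤ E.prank s k) :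
    beats E s X j ≤ beats E s X k := by
  apply Finset.card_le_card
  intro l hl
  rcases Finset.mem_filter.1 hl with ⟨h1, h2⟩
  exact Finset.mem_filter.2 ⟨h1, lt_of_lt_of_le h2 h⟩

lemma beats_lt_of_keep {s : S} {X : Finset I} {j k : I}
    (hk : beats E s X k < E.quota s) (hj : E.quota s ≤ beats E s X j) :
    E.prank s k < E.prank s j := by
  by_contra h
  exact absurd (le_trans hj (beats_mono E (not_lt.1 h))) (not_le.2 hk)

/-- The kept proposers keep at least `min quota (pool size)` students. -/
lemma keep_card (s : S) (X : Finset I) :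
    min (E.quota s) X.card ≤ (X.filter (fun j => beats E s X j < E.quota s)).card := by
  classical
  set c : I → ℕ := fun j => beats E s X j with hc
  have hmono : ∀ j ∈ X, ∀ k ∈ X, E.prank s j < E.prank s k → c j < c k := by
    intro j hj k hk h
    apply Finset.card_lt_card
    constructor
    · intro l hl
      rcases Finset.mem_filter.1 hl with ⟨h1, h2⟩
      exact Finset.mem_filter.2 ⟨h1, lt_trans h2 h⟩
    · intro hsub
      have hjmem : j ∈ X.filter (fun l => E.prank s l < E.prank s k) :=
        Finset.mem_filter.2 ⟨hj, h⟩
      have := hsub hjmem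
      exact absurd (Finset.mem_filter.1 this).2 (lt_irrefl _)
  have hinj : Set.InjOn c X := by
    intro j hj k hk hjk
    by_contra hne
    rcases lt_or_gt_of_ne (fun h => hne (E.inj s h)) with h | h
    · exact absurd hjk (ne_of_lt (hmono j hj k hk h))
    · exact absurd hjk.symm (ne_of_lt (hmono k hk j hj h))
  have hbound : ∀ j ∈ X, c j < X.card := by
    intro j hj
    have hsub : X.filter (fun k => E.prank s k < E.prank s j) ⊆ X.erase j := by
      intro k hk
      rcases Finset.mem_filter.1 hk with ⟨hk1, hk2⟩
      exact Finset.mem_erase.2 ⟨fun h => absurd hk2 (by rw [h]; exact lt_irrefl _), hk1⟩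
    calc c j ≤ (X.erase j).card := Finset.card_le_card hsub
      _ < X.card := by
          rw [Finset.card_erase_of_mem hj]
          have : 1 ≤ X.card := Finset.card_pos.2 ⟨j, hj⟩
          omega
  have himg : X.image c = Finset.range X.card := by
    apply Finset.eq_of_subset_of_card_le
    · intro v hv
      rcases Finset.mem_image.1 hv with ⟨j, hj, rfl⟩
      exact Finset.mem_range.2 (hbound j hj)
    · rw [Finset.card_range, Finset.card_image_of_injOn hinj]
  have hfimg : (X.filter (fun j => c j < E.quota s)).image c
      = (Finset.range X.card).filter (fun v => v < E.quota s) := by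
    rw [← himg]
    ext v
    constructor
    · intro hv
      rcases Finset.mem_image.1 hv with ⟨j, hj, rfl⟩
      rcases Finset.mem_filter.1 hj with ⟨hj1, hj2⟩
      exact Finset.mem_filter.2 ⟨Finset.mem_image_of_mem c hj1, hj2⟩
    · intro hv
      rcases Finset.mem_filter.1 hv with ⟨hv1, hv2⟩
      rcases Finset.mem_image.1 hv1 with ⟨j, hj, rfl⟩
      exact Finset.mem_image_of_mem c (Finset.mem_filter.2 ⟨hj, hv2⟩)
  have hcard : (X.filter (fun j => c j < E.quota s)).card
      = ((Finset.range X.card).filter (fun v => v < E.quota s)).card := by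
    rw [← hfimg, Finset.card_image_of_injOn (hinj.mono (Finset.filter_subset _ _))]
  rw [hcard]
  have : (Finset.range X.card).filter (fun v => v < E.quota s)
      = Finset.range (min X.card (E.quota s)) := by
    ext v
    simp only [Finset.mem_filter, Finset.mem_range, lt_min_iff]
  rw [this, Finset.card_range]
  omega

/-- One round of deferred acceptance: rejected students lose the school they proposed to. -/
noncomputable def dstep (D : I → Finset (Option S)) : I → Finset (Option S) := fun i =>
  Option.elim (dprop P D i) (D i)
    (fun s => if beats E s (dpool P D s) i < E.quota s then D i else (D i).erase (some s))

noncomputable def dstate : ℕ → I → Finset (Option S)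
  | 0 => fun _ => Finset.univ
  | n + 1 => dstep E P (dstate n)

lemma dstate_none_mem : ∀ n i, none ∈ dstate E P n i := by
  intro n
  induction n with
  | zero => intro i; exact Finset.mem_univ _
  | succ n ih =>
    intro i
    show none ∈ dstep E P (dstate E P n) i
    unfold dstep
    cases hp : dprop P (dstate E P n) i with
    | none => exact ih i
    | some s =>
      simp only [Option.elim_some]
      split
      · exact ih i
      · exact Finset.mem_erase.2 ⟨by simp, ih i⟩

lemma dstate_nonempty (n : ℕ) (i : I) : (dstate E P n i).Nonempty :=
  ⟨none, dstate_none_mem E P n i⟩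

lemma dstep_subset (D : I → Finset (Option S)) (i : I) : dstep E P D i ⊆ D i := by
  unfold dstep
  cases hp : dprop P D i with
  | none => exact Finset.Subset.refl _
  | some s =>
    simp only [Option.elim_some]
    split
    · exact Finset.Subset.refl _
    · exact Finset.erase_subset _ _

/-- Cases for membership loss at a step. -/
lemma dstep_mem_cases {D : I → Finset (Option S)} {i : I} {x : Option S}
    (hx : x ∈ D i) (hx' : x ∉ dstep E P D i) :
    ∃ s, x = some s ∧ dprop P D i = some s ∧ E.quota s ≤ beats E s (dpool P D s) i := by
  unfold dstep at hx'
  cases hp : dprop P D i with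
  | none => rw [hp] at hx'; exact absurd hx hx'
  | some s =>
    rw [hp] at hx'
    simp only [Option.elim_some] at hx'
    split at hx'
    · exact absurd hx hx'
    · refine ⟨s, ?_, rfl, not_lt.1 (by assumption)⟩
      by_contra hne
      exact hx' (Finset.mem_erase.2 ⟨fun h => hne h, hx⟩)

lemma kept_dstep_eq {D : I → Finset (Option S)} {j : I} {s : S}
    (hj : dprop P D j = some s) (hk : beats E s (dpool P D s) j < E.quota s) :
    dstep E P D j = D j := by
  unfold dstep
  rw [hj]
  simp only [Option.elim_some]
  rw [if_pos hk]

lemma dprop_congr {D D' : I → Finset (Option S)} {j : I} (h : D' j = D j) :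
    dprop P D' j = dprop P D j := by
  unfold dprop
  rw [h]

/-- The kept set at school `s`. -/
noncomputable def dkeep (D : I → Finset (Option S)) (s : S) : Finset I :=
  (dpool P D s).filter (fun j => beats E s (dpool P D s) j < E.quota s)

lemma dkeep_subset_next (D : I → Finset (Option S)) (s : S) :
    dkeep E P D s ⊆ dpool P (dstep E P D) s := by
  intro j hj
  rcases Finset.mem_filter.1 hj with ⟨hj1, hj2⟩
  have hprop : dprop P D j = some s := (Finset.mem_filter.1 hj1).2
  have heq : dstep E P D j = D j := kept_dstep_eq E P hprop hj2
  exact Finset.mem_filter.2 ⟨Finset.mem_univ _, by rw [dprop_congr P heq]; exact hprop⟩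

lemma dkeep_card {D : I → Finset (Option S)} {s : S} {i : I}
    (hbig : E.quota s ≤ beats E s (dpool P D s) i) :
    E.quota s ≤ (dkeep E P D s).card := by
  have h1 : E.quota s ≤ (dpool P D s).card :=
    le_trans hbig (Finset.card_le_card (Finset.filter_subset _ _))
  have := keep_card E s (dpool P D s)
  unfold dkeep
  omega

lemma dkeep_beats {D : I → Finset (Option S)} {s : S} {i j : I}
    (hbig : E.quota s ≤ beats E s (dpool P D s) i) (hj : j ∈ dkeep E P D s) :
    E.higher s j i :=
  beats_lt_of_keep E (Finset.mem_filter.1 hj).2 hbig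

/-- Invariant: once rejected by `s`, at least `quota s` pool members beat you, forever. -/
lemma inv1 : ∀ n i s, some s ∉ dstate E P n i →
    E.quota s ≤ beats E s (dpool P (dstate E P n) s) i := by
  intro n
  induction n with
  | zero => intro i s h; exact absurd (Finset.mem_univ _) h
  | succ n ih =>
    intro i s h
    set D := dstate E P n with hD
    have hDs : dstate E P (n + 1) = dstep E P D := rfl
    rw [hDs] at h ⊢
    have hold : E.quota s ≤ beats E s (dpool P D s) i := by
      by_cases hmem : some s ∈ D i
      · rcases dstep_mem_cases E P hmem h with ⟨s', hs', hprop, hq⟩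
        cases hs'
        exact hq
      · exact ih i s hmem
    have hsub : dkeep E P D s ⊆ (dpool P (dstep E P D) s).filter
        (fun k => E.prank s k < E.prank s i) := by
      intro j hj
      exact Finset.mem_filter.2 ⟨dkeep_subset_next E P D s hj, dkeep_beats E P hold hj⟩
    calc E.quota s ≤ (dkeep E P D s).card := dkeep_card E P hold
      _ ≤ _ := Finset.card_le_card hsub

/-- Master invariant: against any matching stable for a profile `P₀` that extends `P`
(students may only have been "emptied"), non-emptied students never lose their
`ν`-assignment from their menu. -/
lemma inv2 {P₀ : I → Pref S} (hsub : ∀ j, P j = P₀ j ∨ Unacc (P j)) {ν : Matching I S}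
    (hν : Stable E P₀ ν) :
    ∀ n j, P j = P₀ j → ν j ∈ dstate E P n j := by
  intro n
  induction n with
  | zero => intro j _; exact Finset.mem_univ _
  | succ n ih =>
    intro j hj
    set D := dstate E P n with hD
    have hDs : dstate E P (n + 1) = dstep E P D := rfl
    rw [hDs]
    by_contra hnmem
    rcases dstep_mem_cases E P (ih j hj) hnmem with ⟨s, hνj, hprop, hq⟩
    -- j is rejected by s although ν j = some s; find a kept student blocking ν
    have hkcard : E.quota s ≤ (dkeep E P D s).card := dkeep_card E P hq
    have hjassigned : j ∈ assigned ν s := Finset.mem_filter.2 ⟨Finset.mem_univ _, hνj⟩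
    have hjnotkeep : j ∉ dkeep E P D s := by
      intro hmem
      exact absurd hq (not_le.2 (Finset.mem_filter.1 hmem).2)
    obtain ⟨k, hk, hknot⟩ : ∃ k ∈ dkeep E P D s, k ∉ assigned ν s := by
      by_contra hcon
      push_neg at hcon
      have hsubk : dkeep E P D s ⊆ (assigned ν s).erase j := by
        intro k hkk
        exact Finset.mem_erase.2 ⟨fun h => hjnotkeep (h ▸ hkk), hcon k hkk⟩
      have h1 : (dkeep E P D s).card ≤ (assigned ν s).card - 1 := by
        have := Finset.card_le_card hsubk
        rw [Finset.card_erase_of_mem hjassigned] at this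
        exact this
      have h2 := hν.1 s
      have h3 : 1 ≤ (assigned ν s).card := Finset.card_pos.2 ⟨j, hjassigned⟩
      omega
    have hkprop : dprop P D k = some s := (Finset.mem_filter.1 (Finset.mem_filter.1 hk).1).2
    have hkP : P k = P₀ k := by
      rcases hsub k with h | h
      · exact h
      · exfalso
        have h1 : (P k).rank (some s) ≤ (P k).rank none := by
          rw [← hkprop]
          exact best_min (P k) (dstate_nonempty E P n k) (dstate_none_mem E P n k)
        exact absurd h1 (not_le.2 (h s))
    have hkmem : ν k ∈ D k := ih k hkP
    have hkrank : (P k).rank (some s) ≤ (P k).rank (ν k) := by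
      rw [← hkprop]
      exact best_min (P k) (dstate_nonempty E P n k) hkmem
    have hkne : ν k ≠ some s := fun h => hknot (Finset.mem_filter.2 ⟨Finset.mem_univ _, h⟩)
    have hkstrict : (P₀ k).rank (some s) < (P₀ k).rank (ν k) := by
      rw [← hkP]
      rcases lt_or_eq_of_le hkrank with h | h
      · exact h
      · exact absurd ((P k).inj h) (fun hh => hkne hh.symm)
    exact hν.2.2 k s ⟨hkstrict, Or.inr ⟨j, hνj, dkeep_beats E P hq hk⟩⟩

/-- Terminal state: no one would be rejected any more. -/
def TerminalSt (D : I → Finset (Option S)) : Prop :=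
  ∀ i s, dprop P D i = some s → beats E s (dpool P D s) i < E.quota s

lemma terminal_dstep_eq {D : I → Finset (Option S)} (h : TerminalSt E P D) :
    dstep E P D = D := by
  funext i
  unfold dstep
  cases hp : dprop P D i with
  | none => rfl
  | some s =>
    simp only [Option.elim_some]
    rw [if_pos (h i s hp)]

noncomputable def dmeas (D : I → Finset (Option S)) : ℕ := ∑ i, (D i).card

lemma dmeas_dstep_lt {D : I → Finset (Option S)} (hne : ∀ i, (D i).Nonempty)
    (h : ¬ TerminalSt E P D) :
    dmeas (dstep E P D) < dmeas D := by
  unfold TerminalSt at h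
  push_neg at h
  obtain ⟨i, s, hprop, hq⟩ := h
  have hrej : dstep E P D i = (D i).erase (some s) := by
    unfold dstep
    rw [hprop]
    simp only [Option.elim_some]
    rw [if_neg (not_lt.2 hq)]
  have hmem : some s ∈ D i := hprop ▸ best_mem (P i) (hne i)
  apply Finset.sum_lt_sum
  · intro j _
    exact Finset.card_le_card (dstep_subset E P D j)
  · refine ⟨i, Finset.mem_univ _, ?_⟩
    rw [hrej, Finset.card_erase_of_mem hmem]
    have : 1 ≤ (D i).card := Finset.card_pos.2 ⟨some s, hmem⟩
    omega

/-- The number of iterations that certainly suffices. -/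
noncomputable def dN (I S : Type) [Fintype I] [Fintype S] : ℕ :=
  Fintype.card I * (Fintype.card S + 1)

lemma terminal_reached : TerminalSt E P (dstate E P (dN I S)) := by
  have key : ∀ n, TerminalSt E P (dstate E P n) ∨ dmeas (dstate E P n) + n ≤ dN I S := by
    intro n
    induction n with
    | zero =>
      right
      have : dmeas (dstate E P 0) = dN I S := by
        unfold dmeas dstate dN
        rw [Finset.sum_const, Finset.card_univ]
        simp [Fintype.card_option, Nat.mul_comm]
      omega
    | succ n ih =>
      rcases ih with h | h
      · left
        have heq : dstate E P (n + 1) = dstate E P n := terminal_dstep_eq E P h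
        rw [heq]
        exact h
      · by_cases ht : TerminalSt E P (dstate E P n)
        · left
          have heq : dstate E P (n + 1) = dstate E P n := terminal_dstep_eq E P ht
          rw [heq]
          exact ht
        · right
          have := dmeas_dstep_lt E P (dstate_nonempty E P n) ht
          have h2 : dmeas (dstate E P (n + 1)) < dmeas (dstate E P n) := this
          omega
  rcases key (dN I S) with h | h
  · exact h
  · -- measure would be 0, but every menu contains `none`
    by_cases hI : Nonempty I
    · exfalso
      obtain ⟨i⟩ := hI
      have h1 : 1 ≤ (dstate E P (dN I S) i).card :=
        Finset.card_pos.2 ⟨none, dstate_none_mem E P _ i⟩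
      have h2 : (dstate E P (dN I S) i).card ≤ dmeas (dstate E P (dN I S)) := by
        unfold dmeas
        exact Finset.single_le_sum (f := fun j => (dstate E P (dN I S) j).card)
          (fun j _ => Nat.zero_le _) (Finset.mem_univ i)
      omega
    · intro i
      exact absurd ⟨i⟩ hI

/-- The deferred-acceptance matching, computed by the algorithm. -/
noncomputable def DAm : Matching I S := fun i => dprop P (dstate E P (dN I S)) i

lemma DAm_assigned (s : S) : assigned (DAm E P) s = dpool P (dstate E P (dN I S)) s := by
  ext i
  unfold assigned dpool DAm
  constructor
  · intro h; exact Finset.mem_filter.2 ⟨Finset.mem_univ _, (Finset.mem_filter.1 h).2⟩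
  · intro h; exact Finset.mem_filter.2 ⟨Finset.mem_univ _, (Finset.mem_filter.1 h).2⟩

lemma DAm_feasible : Feasible E (DAm E P) := by
  intro s
  rw [DAm_assigned]
  have hD : True := trivial
  by_contra hcon
  push_neg at hcon
  obtain ⟨j, hj, hjmax⟩ := Finset.exists_max_image (dpool P (dstate E P (dN I S)) s) (E.prank s)
      (Finset.card_pos.1 (by omega))
  have hbeats : (dpool P (dstate E P (dN I S)) s).erase j ⊆
      (dpool P (dstate E P (dN I S)) s).filter (fun k => E.prank s k < E.prank s j) := by
    intro k hk
    rcases Finset.mem_erase.1 hk with ⟨hne, hkmem⟩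
    refine Finset.mem_filter.2 ⟨hkmem, ?_⟩
    rcases lt_or_eq_of_le (hjmax k hkmem) with h | h
    · exact h
    · exact absurd (E.inj s h) (fun hh => hne hh)
  have h1 : (dpool P (dstate E P (dN I S)) s).card - 1
      ≤ beats E s (dpool P (dstate E P (dN I S)) s) j := by
    have := Finset.card_le_card hbeats
    rw [Finset.card_erase_of_mem hj] at this
    exact this
  have h2 : dprop P (dstate E P (dN I S)) j = some s := (Finset.mem_filter.1 hj).2
  have h3 := terminal_reached E P j s h2
  omega

lemma DAm_stable : Stable E P (DAm E P) := by
  refine ⟨DAm_feasible E P, ?_, ?_⟩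
  · intro i
    exact best_min (P i) (dstate_nonempty E P _ i) (dstate_none_mem E P _ i)
  · rintro i s ⟨hpref, hcond⟩
    have hnotmem : some s ∉ dstate E P (dN I S) i := by
      intro hmem
      have := best_min (P i) (dstate_nonempty E P (dN I S) i) hmem
      exact absurd hpref (not_lt.2 this)
    have hinv := inv1 E P (dN I S) i s hnotmem
    have hfull : E.quota s ≤ (assigned (DAm E P) s).card := by
      rw [DAm_assigned]
      exact le_trans hinv (Finset.card_le_card (Finset.filter_subset _ _))
    rcases hcond with h | ⟨j, hj, hhi⟩
    · exact absurd h (not_lt.2 hfull)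
    · -- all assigned students beat i
      have hjpool : j ∈ dpool P (dstate E P (dN I S)) s := by
        rw [← DAm_assigned]
        exact Finset.mem_filter.2 ⟨Finset.mem_univ _, hj⟩
      -- the set of pool members beating i has card ≥ quota = card pool, so it is all of pool
      have hsub : (dpool P (dstate E P (dN I S)) s).filter
          (fun k => E.prank s k < E.prank s i) = dpool P (dstate E P (dN I S)) s := by
        apply Finset.eq_of_subset_of_card_le (Finset.filter_subset _ _)
        have hle : (dpool P (dstate E P (dN I S)) s).card ≤ E.quota s := by
          rw [← DAm_assigned]
          exact DAm_feasible E P s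
        unfold beats at hinv
        omega
      have : E.prank s j < E.prank s i := by
        have := hsub ▸ hjpool
        rw [← hsub] at hjpool
        exact (Finset.mem_filter.1 hjpool).2
      unfold Prio.higher at hhi
      omega

lemma DAm_optimal {ν : Matching I S} (hν : Stable E P ν) (j : I) :
    (P j).rank (DAm E P j) ≤ (P j).rank (ν j) := by
  have hmem : ν j ∈ dstate E P (dN I S) j :=
    inv2 E P (fun k => Or.inl rfl) hν (dN I S) j rfl
  exact best_min (P j) (dstate_nonempty E P _ j) hmem

lemma DAm_SO : StudentOptimal E P (DAm E P) :=
  ⟨DAm_stable E P, fun ν hν j => DAm_optimal E P hν j⟩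

lemma SO_unique {μ ν : Matching I S} (hμ : StudentOptimal E P μ) (hν : StudentOptimal E P ν) :
    μ = ν := by
  funext j
  have h1 := hμ.2 ν hν.1 j
  have h2 := hν.2 μ hμ.1 j
  exact (P j).inj (le_antisymm h1 h2)

lemma DA_SO : StudentOptimal E P (DA E P) := by
  have hex : ∃ μ, StudentOptimal E P μ := ⟨DAm E P, DAm_SO E P⟩
  rw [DA, dif_pos hex]
  exact hex.choose_spec

lemma DA_stable : Stable E P (DA E P) := (DA_SO E P).1

lemma DA_optimal {ν : Matching I S} (hν : Stable E P ν) (j : I) :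
    (P j).rank (DA E P j) ≤ (P j).rank (ν j) := (DA_SO E P).2 ν hν j

lemma DA_eq_DAm : DA E P = DAm E P := SO_unique E P (DA_SO E P) (DAm_SO E P)

/-- Comparative statics: emptying some students' lists makes the remaining students
weakly better off than in any matching stable for the original profile. -/
lemma DA_CS {P₀ : I → Pref S} (hsub : ∀ j, P j = P₀ j ∨ Unacc (P j)) {ν : Matching I S}
    (hν : Stable E P₀ ν) {j : I} (hj : P j = P₀ j) :
    (P₀ j).rank (DA E P j) ≤ (P₀ j).rank (ν j) := by
  rw [DA_eq_DAm, ← hj]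
  have hmem : ν j ∈ dstate E P (dN I S) j := inv2 E P hsub hν (dN I S) j hj
  exact best_min (P j) (dstate_nonempty E P _ j) hmem

lemma higher_total {s : S} {x y : I} (hxy : x ≠ y) (h : ¬ E.higher s x y) : E.higher s y x := by
  unfold Prio.higher at *
  rcases Nat.lt_trichotomy (E.prank s x) (E.prank s y) with h1 | h1 | h1
  · exact absurd h1 h
  · exact absurd (E.inj s h1) hxy
  · exact h1

/-- Cutoff comparative statics: if a school is full of students all beating `i₀` in the
smaller (emptied) market, it is also so in the larger market. -/
lemma DA_cut {π P : I → Pref S} (hsub : ∀ j, π j = P j ∨ Unacc (π j)) (s : S) (i₀ : I)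
    (h1 : (assigned (DA E π) s).card = E.quota s)
    (h2 : ∀ j ∈ assigned (DA E π) s, E.higher s j i₀) :
    (assigned (DA E P) s).card = E.quota s ∧ ∀ j ∈ assigned (DA E P) s, E.higher s j i₀ := by
  have hνst := DA_stable E P
  have hωst := DA_stable E π
  -- the larger market fills s completely
  have hfull : (assigned (DA E P) s).card = E.quota s := by
    rcases lt_or_ge ((assigned (DA E P) s).card) (E.quota s) with hlt | hge
    · exfalso
      obtain ⟨m, hm, hmnot⟩ : ∃ m ∈ assigned (DA E π) s, m ∉ assigned (DA E P) s := by
        by_contra hcon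
        push_neg at hcon
        have := Finset.card_le_card hcon
        omega
      have hωm : DA E π m = some s := (Finset.mem_filter.1 hm).2
      have hπm : π m = P m := by
        rcases hsub m with h | h
        · exact h
        · exact absurd (stable_unacc_none E hωst h) (by rw [hωm]; simp)
      have hcs : (P m).rank (DA E π m) ≤ (P m).rank (DA E P m) := DA_CS E π hsub hνst hπm
      rw [hωm] at hcs
      have hne : DA E P m ≠ some s := fun h => hmnot (Finset.mem_filter.2 ⟨Finset.mem_univ _, h⟩)
      have hstrict : (P m).rank (some s) < (P m).rank (DA E P m) := by
        rcases lt_or_eq_of_le hcs with h | h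
        · exact h
        · exact absurd ((P m).inj h).symm hne
      exact hνst.2.2 m s ⟨hstrict, Or.inl hlt⟩
    · exact le_antisymm (hνst.1 s) hge
  refine ⟨hfull, ?_⟩
  intro l hl
  by_contra hlH
  have hνl : DA E P l = some s := (Finset.mem_filter.1 hl).2
  have hlω : l ∉ assigned (DA E π) s := fun h => hlH (h2 l h)
  obtain ⟨w, hw, hwnot⟩ : ∃ w ∈ assigned (DA E π) s, w ∉ assigned (DA E P) s := by
    by_contra hcon
    push_neg at hcon
    have heq : assigned (DA E π) s = assigned (DA E P) s :=
      Finset.eq_of_subset_of_card_le hcon (by omega)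
    exact hlω (heq ▸ hl)
  have hωw : DA E π w = some s := (Finset.mem_filter.1 hw).2
  have hπw : π w = P w := by
    rcases hsub w with h | h
    · exact h
    · exact absurd (stable_unacc_none E hωst h) (by rw [hωw]; simp)
  have hcs : (P w).rank (DA E π w) ≤ (P w).rank (DA E P w) := DA_CS E π hsub hνst hπw
  rw [hωw] at hcs
  have hne : DA E P w ≠ some s := fun h => hwnot (Finset.mem_filter.2 ⟨Finset.mem_univ _, h⟩)
  have hstrict : (P w).rank (some s) < (P w).rank (DA E P w) := by
    rcases lt_or_eq_of_le hcs with h | h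
    · exact h
    · exact absurd ((P w).inj h).symm hne
  -- w would block (w, s) unless everyone at s beats w; in particular l beats w
  have hnoblock := hνst.2.2 w s
  have hlw : ¬ E.higher s w l := by
    intro hh
    exact hnoblock ⟨hstrict, Or.inr ⟨l, hνl, hh⟩⟩
  have hwi : E.higher s w i₀ := h2 w hw
  have hil : ¬ E.higher s l i₀ := hlH
  unfold Prio.higher at *
  omega

/-- Reachable schools in the comparison of two matchings. -/
inductive ReachSch (ν ω : Matching I S) (s : S) : S → Prop
  | base : ReachSch ν ω s s
  | step {x y : S} {X : I} : ReachSch ν ω s x → ν X = some x → ω X ≠ some x →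
      ω X = some y → ReachSch ν ω s y

/-- **Key acyclicity lemma**: if the deviator `i` (who finds only schools in `A`
acceptable) is rejected although school `s` is kept full by higher-priority students, then
removing `i` from the market cannot weaken school `s`'s student body below `i`, unless the
priority structure has a cycle in `A`. -/
lemma keyK {A : S → Prop} (hacyc : ¬ Cycle E A) {π P' : I → Pref S} {i : I} {s : S}
    (hA : ∀ (j : I) (x : S), (π j).rank (some x) < (π j).rank none → A x)
    (hsA : A s)
    (hπi : Unacc (π i))
    (hne : ∀ j, j ≠ i → π j = P' j)
    (hν'i : DA E P' i = none)
    (hfull : (assigned (DA E P') s).card = E.quota s)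
    (hhi : ∀ j ∈ assigned (DA E P') s, E.higher s j i) :
    (assigned (DA E π) s).card = E.quota s ∧ ∀ l ∈ assigned (DA E π) s, E.higher s l i := by
  classical
  set ν := DA E P' with hνdef
  set ω := DA E π with hωdef
  have hνP' : Stable E P' ν := DA_stable E P'
  -- ν is stable for the emptied profile π too
  have hνπ : Stable E π ν := by
    refine ⟨hνP'.1, ?_, ?_⟩
    · intro j
      by_cases hj : j = i
      · rw [hj, hν'i]
      · rw [hne j hj]
        exact hνP'.2.1 j
    · intro j x hb
      obtain ⟨hb1, hb2⟩ := hb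
      by_cases hj : j = i
      · rw [hj, hν'i] at hb1
        exact absurd hb1 (not_lt.2 (le_of_lt (hπi x)))
      · rw [hne j hj] at hb1
        exact hνP'.2.2 j x ⟨hb1, hb2⟩
  have hωst : Stable E π ω := DA_stable E π
  have hCS : ∀ j, (π j).rank (ω j) ≤ (π j).rank (ν j) := fun j => DA_optimal E π hνπ j
  have hmatched : ∀ j x, ν j = some x → ω j ≠ none := by
    intro j x hj hcon
    have h1 := hCS j
    rw [hj, hcon] at h1
    exact absurd h1 (not_le.2 (stable_matched_acc E hνπ hj))
  have hstrict : ∀ j x, ν j = some x → ω j ≠ some x →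
      (π j).rank (ω j) < (π j).rank (some x) := by
    intro j x hj hjne
    have h1 := hCS j
    rw [hj] at h1
    rcases lt_or_eq_of_le h1 with h | h
    · exact h
    · exact absurd ((π j).inj h) hjne
  -- cardinalities agree school by school
  have hcard_le : ∀ x, (assigned ω x).card ≤ (assigned ν x).card := by
    intro x
    by_contra hcon
    push_neg at hcon
    obtain ⟨m, hm, hmnot⟩ : ∃ m ∈ assigned ω x, m ∉ assigned ν x := by
      by_contra hc
      push_neg at hc
      have := Finset.card_le_card hc
      omega
    have hωm : ω m = some x := (Finset.mem_filter.1 hm).2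
    have hνne : ν m ≠ some x := fun h => hmnot (Finset.mem_filter.2 ⟨Finset.mem_univ _, h⟩)
    have hpref : (π m).rank (some x) < (π m).rank (ν m) := by
      have h1 := hCS m
      rw [hωm] at h1
      rcases lt_or_eq_of_le h1 with h | h
      · exact h
      · exact absurd ((π m).inj h).symm hνne
    have hlt : (assigned ν x).card < E.quota x := lt_of_lt_of_le hcon (hωst.1 x)
    exact hνπ.2.2 m x ⟨hpref, Or.inl hlt⟩
  have hcards : ∀ x, (assigned ω x).card = (assigned ν x).card := by
    by_contra hcon
    push_neg at hcon
    obtain ⟨x₀, hx₀⟩ := hcon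
    have hstrictx : (assigned ω x₀).card < (assigned ν x₀).card :=
      lt_of_le_of_ne (hcard_le x₀) hx₀
    have hsum : ∑ x, (assigned ω x).card < ∑ x, (assigned ν x).card :=
      Finset.sum_lt_sum (fun x _ => hcard_le x) ⟨x₀, Finset.mem_univ _, hstrictx⟩
    have hballν : (Finset.univ : Finset S).biUnion (assigned ν) ⊆
        (Finset.univ : Finset S).biUnion (assigned ω) := by
      intro j hj
      rcases Finset.mem_biUnion.1 hj with ⟨x, _, hjx⟩
      have hνj : ν j = some x := (Finset.mem_filter.1 hjx).2
      cases hωj : ω j with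
      | none => exact absurd hωj (hmatched j x hνj)
      | some y =>
        exact Finset.mem_biUnion.2 ⟨y, Finset.mem_univ _,
          Finset.mem_filter.2 ⟨Finset.mem_univ _, hωj⟩⟩
    have hdisj : ∀ (μ : Matching I S), ∀ x ∈ (Finset.univ : Finset S),
        ∀ y ∈ (Finset.univ : Finset S), x ≠ y →
        Disjoint (assigned μ x) (assigned μ y) := by
      intro μ x _ y _ hxy
      refine Finset.disjoint_left.2 ?_
      intro j hjx hjy
      have h1 : μ j = some x := (Finset.mem_filter.1 hjx).2
      have h2 : μ j = some y := (Finset.mem_filter.1 hjy).2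
      rw [h1] at h2
      exact hxy (Option.some.inj h2)
    have hcν : ((Finset.univ : Finset S).biUnion (assigned ν)).card
        = ∑ x, (assigned ν x).card := Finset.card_biUnion (hdisj ν)
    have hcω : ((Finset.univ : Finset S).biUnion (assigned ω)).card
        = ∑ x, (assigned ω x).card := Finset.card_biUnion (hdisj ω)
    have := Finset.card_le_card hballν
    omega
  -- the base school is full of H-students with respect to ν
  have hbase_full : (assigned ν s).card = E.quota s := hfull
  have hbase_H : ∀ z ∈ assigned ν s, E.higher s z i := hhi
  have hνi : ν i = none := hν'i
  -- propagation of the invariant along reachable schools, using acyclicity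
  have prop : ∀ x, (assigned ν x).card = E.quota x → (∀ z ∈ assigned ν x, E.higher s z i) →
      ∀ (X : I) (y : S), ν X = some x → ω X ≠ some x → ω X = some y →
      (assigned ν y).card = E.quota y ∧ ∀ z ∈ assigned ν y, E.higher s z i := by
    intro x hxfull hxH X y hνX hωX hωy
    by_cases hys : y = s
    · subst hys
      exact ⟨hbase_full, hbase_H⟩
    have hXmem : X ∈ assigned ν x := Finset.mem_filter.2 ⟨Finset.mem_univ _, hνX⟩
    have hprefy : (π X).rank (some y) < (π X).rank (ν X) := by
      have := hstrict X x hνX hωX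
      rw [hωy] at this
      rw [hνX]
      exact this
    have hnb := hνπ.2.2 X y
    have hyfull : (assigned ν y).card = E.quota y := by
      rcases lt_or_ge ((assigned ν y).card) (E.quota y) with h | h
      · exact absurd ⟨hprefy, Or.inl h⟩ hnb
      · exact le_antisymm (hνπ.1 y) h
    have hxyne : x ≠ y := by
      intro h
      exact hωX (by rw [hωy, h])
    have hyX : ∀ z ∈ assigned ν y, E.higher y z X := by
      intro z hz
      have hνz : ν z = some y := (Finset.mem_filter.1 hz).2
      have hzX : z ≠ X := by
        intro h
        rw [h, hνX] at hνz
        exact hxyne (Option.some.inj hνz)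
      refine higher_total E (Ne.symm hzX) ?_
      intro hh
      exact hnb ⟨hprefy, Or.inr ⟨z, hνz, hh⟩⟩
    refine ⟨hyfull, ?_⟩
    intro z hz
    by_contra hzH
    have hνz : ν z = some y := (Finset.mem_filter.1 hz).2
    have hzi : z ≠ i := by
      intro h
      rw [h, hνi] at hνz
      exact nomatch hνz
    have hiz : E.higher s i z := higher_total E hzi hzH
    -- construct an Ergin cycle between s and y
    have hXH : E.higher s X i := hxH X hXmem
    have hzX : E.higher y z X := hyX z hz
    have hAy : A y := by
      apply hA X y
      calc (π X).rank (some y) < (π X).rank (ν X) := hprefy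
        _ < (π X).rank none := by rw [hνX]; exact stable_matched_acc E hνπ hνX
    have hsnonempty : (assigned ν s).Nonempty ∨ E.quota s = 0 := by
      rcases Nat.eq_zero_or_pos (E.quota s) with h | h
      · exact Or.inr h
      · exact Or.inl (Finset.card_pos.1 (by omega))
    -- choose the element to drop from ν(s)
    obtain ⟨Ia, hIa_sub, hIa_card, hIa_X⟩ :
        ∃ Ia : Finset I, Ia ⊆ assigned ν s ∧ Ia.card = E.quota s - 1 ∧ X ∉ Ia := by
      by_cases hXs : X ∈ assigned ν s
      · exact ⟨(assigned ν s).erase X, Finset.erase_subset _ _,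
          by rw [Finset.card_erase_of_mem hXs, hbase_full], Finset.notMem_erase _ _⟩
      · rcases hsnonempty with ⟨w, hw⟩ | hq0
        · refine ⟨(assigned ν s).erase w, Finset.erase_subset _ _,
            by rw [Finset.card_erase_of_mem hw, hbase_full], ?_⟩
          intro hmem
          exact hXs (Finset.mem_of_mem_erase hmem)
        · refine ⟨∅, Finset.empty_subset _, ?_, Finset.notMem_empty _⟩
          simp [hq0]
    apply hacyc
    refine ⟨s, y, hsA, hAy, fun h => hys h.symm, X, i, z, hXH, hiz, hzX,
      Ia, (assigned ν y).erase z, ?_, ?_, ?_, hIa_card,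
      by rw [Finset.card_erase_of_mem hz, hyfull]⟩
    · -- disjointness
      refine Finset.disjoint_left.2 ?_
      intro l hl1 hl2
      have h1 : ν l = some s := (Finset.mem_filter.1 (hIa_sub hl1)).2
      have h2 : ν l = some y := (Finset.mem_filter.1 (Finset.mem_of_mem_erase hl2)).2
      rw [h1] at h2
      exact hys (Option.some.inj h2).symm
    · -- Ia conditions
      intro l hl
      have hlmem : l ∈ assigned ν s := hIa_sub hl
      have hνl : ν l = some s := (Finset.mem_filter.1 hlmem).2
      refine ⟨fun h => hIa_X (h ▸ hl), ?_, ?_, hbase_H l hlmem⟩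
      · intro h
        rw [h, hνi] at hνl
        exact nomatch hνl
      · intro h
        rw [h, hνz] at hνl
        exact hys (Option.some.inj hνl)
    · -- Ib conditions
      intro l hl
      have hlmem : l ∈ assigned ν y := Finset.mem_of_mem_erase hl
      have hνl : ν l = some y := (Finset.mem_filter.1 hlmem).2
      refine ⟨?_, ?_, (Finset.mem_erase.1 hl).1, hyX l hlmem⟩
      · intro h
        rw [h, hνX] at hνl
        exact hxyne (Option.some.inj hνl)
      · intro h
        rw [h, hνi] at hνl
        exact nomatch hνl
  -- every reachable school is full of H-students under ν
  have hgood : ∀ x, ReachSch ν ω s x →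
      (assigned ν x).card = E.quota x ∧ ∀ z ∈ assigned ν x, E.higher s z i := by
    intro x hx
    induction hx with
    | base => exact ⟨hbase_full, hbase_H⟩
    | step hr hνX hωX hωy ih => exact prop _ ih.1 ih.2 _ _ hνX hωX hωy
  -- counting argument
  set RS : Finset S := Finset.univ.filter (fun x => ReachSch ν ω s x) with hRS
  have hsRS : s ∈ RS := Finset.mem_filter.2 ⟨Finset.mem_univ _, ReachSch.base⟩
  have hdisj : ∀ (μ : Matching I S), ∀ x ∈ RS, ∀ y ∈ RS, x ≠ y →
      Disjoint (assigned μ x) (assigned μ y) := by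
    intro μ x _ y _ hxy
    refine Finset.disjoint_left.2 ?_
    intro j hjx hjy
    have h1 : μ j = some x := (Finset.mem_filter.1 hjx).2
    have h2 : μ j = some y := (Finset.mem_filter.1 hjy).2
    rw [h1] at h2
    exact hxy (Option.some.inj h2)
  have hABsub : RS.biUnion (assigned ν) ⊆ RS.biUnion (assigned ω) := by
    intro j hj
    rcases Finset.mem_biUnion.1 hj with ⟨x, hx, hjx⟩
    have hνj : ν j = some x := (Finset.mem_filter.1 hjx).2
    have hxR : ReachSch ν ω s x := (Finset.mem_filter.1 hx).2
    cases hωj : ω j with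
    | none => exact absurd hωj (hmatched j x hνj)
    | some y =>
      by_cases hxy : y = x
      · subst hxy
        exact Finset.mem_biUnion.2 ⟨y, hx, Finset.mem_filter.2 ⟨Finset.mem_univ _, hωj⟩⟩
      · have hyR : ReachSch ν ω s y :=
          ReachSch.step hxR hνj (by rw [hωj]; exact fun h => hxy (Option.some.inj h)) hωj
        exact Finset.mem_biUnion.2 ⟨y, Finset.mem_filter.2 ⟨Finset.mem_univ _, hyR⟩,
          Finset.mem_filter.2 ⟨Finset.mem_univ _, hωj⟩⟩
  have hABeq : RS.biUnion (assigned ν) = RS.biUnion (assigned ω) := by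
    apply Finset.eq_of_subset_of_card_le hABsub
    rw [Finset.card_biUnion (hdisj ν), Finset.card_biUnion (hdisj ω)]
    apply Finset.sum_le_sum
    intro x _
    exact le_of_eq (hcards x)
  constructor
  · rw [hcards s]
    exact hbase_full
  · intro l hl
    have hlB : l ∈ RS.biUnion (assigned ω) := Finset.mem_biUnion.2 ⟨s, hsRS, hl⟩
    rw [← hABeq] at hlB
    rcases Finset.mem_biUnion.1 hlB with ⟨x, hx, hjx⟩
    exact (hgood x (Finset.mem_filter.1 hx).2).2 l hjx

/-! ### Preferences utilities -/

lemma trunc_rank_none (A : S → Prop) [DecidablePred A] (p : Pref S) :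
    (trunc A p).rank none = p.rank none := by
  simp [trunc, goodB]

lemma trunc_rank_pos (A : S → Prop) [DecidablePred A] (p : Pref S) {s : S} (h : A s) :
    (trunc A p).rank (some s) = p.rank (some s) := by
  simp [trunc, goodB, h]

lemma trunc_rank_neg (A : S → Prop) [DecidablePred A] (p : Pref S) {s : S} (h : ¬ A s) :
    (trunc A p).rank (some s) = bnd p + p.rank (some s) := by
  simp [trunc, goodB, h]

lemma trunc_acc_iff (A : S → Prop) [DecidablePred A] (p : Pref S) (s : S) :
    ((trunc A p).rank (some s) < (trunc A p).rank none ↔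
      A s ∧ p.rank (some s) < p.rank none) := by
  by_cases h : A s
  · rw [trunc_rank_pos A p h, trunc_rank_none]
    simp [h]
  · rw [trunc_rank_neg A p h, trunc_rank_none]
    have := rank_lt_bnd p none
    constructor
    · intro hh; omega
    · intro hh; exact absurd hh.1 h

lemma trunc_unacc (A : S → Prop) [DecidablePred A] (p : Pref S)
    (h : ∀ s, A s → p.rank none < p.rank (some s)) : Unacc (trunc A p) := by
  intro s
  by_cases hs : A s
  · rw [trunc_rank_pos A p hs, trunc_rank_none]
    exact h s hs
  · rw [trunc_rank_neg A p hs, trunc_rank_none]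
    have := rank_lt_bnd p none
    omega

lemma truncFalse_unacc (p : Pref S) : Unacc (trunc (fun _ => False) p) :=
  trunc_unacc _ p (fun s h => absurd h (fun h => h))

/-- The preference declaring exactly the school in `o` (if any) acceptable, most preferred. -/
noncomputable def onlyO (o : Option S) (p : Pref S) : Pref S where
  rank x := if x = o then 0 else if x = none then 1 else p.rank x + 2
  inj := by
    intro x y h
    by_cases hx : x = o <;> by_cases hy : y = o <;>
      simp only [hx, hy, if_pos, if_neg, if_true, if_false] at h
    · rw [hx, hy]
    · exfalso; split at h <;> omega
    · exfalso; split at h <;> omega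
    · by_cases hx2 : x = none <;> by_cases hy2 : y = none
      · rw [hx2, hy2]
      · rw [if_pos hx2, if_neg hy2] at h; omega
      · rw [if_neg hx2, if_pos hy2] at h; omega
      · rw [if_neg hx2, if_neg hy2] at h
        exact p.inj (by omega)

lemma onlyO_rank_self (o : Option S) (p : Pref S) : (onlyO o p).rank o = 0 := by
  simp [onlyO]

lemma onlyO_rank_none_of_some (s₀ : S) (p : Pref S) :
    (onlyO (some s₀) p).rank none = 1 := by
  simp [onlyO]

lemma onlyO_rank_other (o : Option S) (p : Pref S) {x : Option S} (h1 : x ≠ o)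
    (h2 : x ≠ none) : (onlyO o p).rank x = p.rank x + 2 := by
  simp [onlyO, h1, h2]

lemma onlyO_acc_iff (o : Option S) (p : Pref S) (x : S) :
    ((onlyO o p).rank (some x) < (onlyO o p).rank none ↔ o = some x) := by
  constructor
  · intro h
    by_contra hne
    have h1 : (onlyO o p).rank (some x) = p.rank (some x) + 2 :=
      onlyO_rank_other o p (fun hh => hne hh.symm) (by simp)
    have h2 : (onlyO o p).rank none ≤ 1 := by
      show (if (none : Option S) = o then 0
        else if (none : Option S) = none then 1 else p.rank none + 2) ≤ 1
      split
      · omega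
      · rw [if_pos rfl]
    omega
  · intro h
    rw [← h, onlyO_rank_self]
    have hne : (onlyO o p).rank none ≠ 0 := by
      intro hh
      have h2 : (onlyO o p).rank none = (onlyO o p).rank o := by
        rw [hh, onlyO_rank_self]
      have h3 := (onlyO o p).inj h2
      rw [h] at h3
      exact nomatch h3
    omega

lemma unacc_of_rank_none_zero (p : Pref S) (h : p.rank none = 0) : Unacc p := by
  intro s
  rw [h]
  have : p.rank (some s) ≠ 0 := by
    intro hh
    exact nomatch (p.inj (hh.trans h.symm))
  omega

/-! ### Generic TDA round lemmas -/

/-- The preference profile used by `TDAaux` in round `k + 1`. -/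
noncomputable def roundPref (E : Prio I S) (t : S → ℕ) (Q : I → Pref S) (k : ℕ) :
    I → Pref S := fun j =>
  if TDAaux E t Q k j = none then trunc (fun s => t s = k + 1) (Q j)
  else trunc (fun _ => False) (Q j)

lemma TDAaux_succ (E : Prio I S) (t : S → ℕ) (Q : I → Pref S) (k : ℕ) (i : I) :
    TDAaux E t Q (k + 1) i =
      match TDAaux E t Q k i with
      | some s => some s
      | none => DA E (roundPref E t Q k) i := rfl

lemma TDAaux_succ_matched (E : Prio I S) (t : S → ℕ) (Q : I → Pref S) {k : ℕ} {i : I}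
    {s : S} (h : TDAaux E t Q k i = some s) : TDAaux E t Q (k + 1) i = some s := by
  rw [TDAaux_succ, h]

lemma TDAaux_succ_un (E : Prio I S) (t : S → ℕ) (Q : I → Pref S) {k : ℕ} {i : I}
    (h : TDAaux E t Q k i = none) :
    TDAaux E t Q (k + 1) i = DA E (roundPref E t Q k) i := by
  rw [TDAaux_succ, h]

lemma TDAaux_mono (E : Prio I S) (t : S → ℕ) (Q : I → Pref S) {k k' : ℕ} {i : I} {s : S}
    (hk : k ≤ k') (h : TDAaux E t Q k i = some s) : TDAaux E t Q k' i = some s := by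
  induction k' with
  | zero =>
    have : k = 0 := by omega
    rw [← this]; exact h
  | succ k' ih =>
    by_cases hk2 : k = k' + 1
    · rw [← hk2]; exact h
    · have : k ≤ k' := by omega
      exact TDAaux_succ_matched E t Q (ih this)

lemma TDAaux_none_le (E : Prio I S) (t : S → ℕ) (Q : I → Pref S) {k k' : ℕ} {i : I}
    (hk : k ≤ k') (h : TDAaux E t Q k' i = none) : TDAaux E t Q k i = none := by
  cases hx : TDAaux E t Q k i with
  | none => rfl
  | some s =>
    rw [TDAaux_mono E t Q hk hx] at h
    exact nomatch h

/-- A matched school's tier equals the round where the student got it void;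
moreover the student finds it `Q`-acceptable. -/
lemma TDAaux_tier (E : Prio I S) (t : S → ℕ) (Q : I → Pref S) :
    ∀ (k : ℕ) (i : I) (s : S), TDAaux E t Q k i = some s →
      1 ≤ t s ∧ t s ≤ k ∧ TDAaux E t Q (t s - 1) i = none ∧
        DA E (roundPref E t Q (t s - 1)) i = some s ∧
        (Q i).rank (some s) < (Q i).rank none := by
  intro k
  induction k with
  | zero => intro i s h; exact nomatch h
  | succ k ih =>
    intro i s h
    cases hx : TDAaux E t Q k i with
    | some s' =>
      rw [TDAaux_succ_matched E t Q hx] at h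
      rw [Option.some.inj h] at hx
      obtain ⟨a, b, c, d, e⟩ := ih i s hx
      exact ⟨a, by omega, c, d, e⟩
    | none =>
      rw [TDAaux_succ_un E t Q hx] at h
      have hst := DA_stable E (roundPref E t Q k)
      have hacc := stable_matched_acc E hst h
      have hpref : roundPref E t Q k i = trunc (fun s => t s = k + 1) (Q i) := by
        rw [roundPref, if_pos hx]
      rw [hpref] at hacc
      rcases (trunc_acc_iff _ (Q i) s).1 hacc with ⟨hts, hQacc⟩
      have hts1 : t s - 1 = k := by omega
      refine ⟨by omega, by omega, ?_, ?_, hQacc⟩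
      · rw [hts1]; exact hx
      · rw [hts1]; exact h

/-- The students assigned to `s` by TDA are exactly those assigned by the round-`t s` DA. -/
lemma TDA_assigned (E : Prio I S) (t : S → ℕ) (Q : I → Pref S) (s : S) (hts : 1 ≤ t s) :
    assigned (TDA E t Q) s = assigned (DA E (roundPref E t Q (t s - 1))) s := by
  ext j
  simp only [assigned, Finset.mem_filter, Finset.mem_univ, true_and]
  constructor
  · intro h
    exact (TDAaux_tier E t Q _ j s h).2.2.2.1
  · intro h
    have hun : TDAaux E t Q (t s - 1) j = none := by
      cases hx : TDAaux E t Q (t s - 1) j with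
      | none => rfl
      | some x =>
        exfalso
        have hpref : roundPref E t Q (t s - 1) j = trunc (fun _ => False) (Q j) := by
          rw [roundPref, if_neg (by rw [hx]; exact fun hh => nomatch hh)]
        have := stable_unacc_none E (DA_stable E (roundPref E t Q (t s - 1)))
          (by rw [hpref]; exact truncFalse_unacc (Q j))
        rw [this] at h
        exact nomatch h
    have hsucc : TDAaux E t Q (t s - 1 + 1) j = some s := by
      rw [TDAaux_succ_un E t Q hun]; exact h
    have : TDAaux E t Q (t s) j = some s := by
      have he : t s - 1 + 1 = t s := by omega
      rw [← he]; exact hsucc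
    exact TDAaux_mono E t Q (Finset.le_sup (Finset.mem_univ s)) this

/-- A student who finds nothing acceptable in the first `k` tiers stays unmatched. -/
lemma TDAaux_none_of (E : Prio I S) (t : S → ℕ) (Q : I → Pref S) (i : I) :
    ∀ (k : ℕ), (∀ m, m < k → ∀ x, t x = m + 1 →
      ¬ ((Q i).rank (some x) < (Q i).rank none)) →
      TDAaux E t Q k i = none := by
  intro k
  induction k with
  | zero => intro _; rfl
  | succ k ih =>
    intro h
    have hk : TDAaux E t Q k i = none := ih (fun m hm => h m (by omega))
    rw [TDAaux_succ_un E t Q hk]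
    cases hD : DA E (roundPref E t Q k) i with
    | none => rfl
    | some x =>
      exfalso
      have hacc := stable_matched_acc E (DA_stable E (roundPref E t Q k)) hD
      have hpref : roundPref E t Q k i = trunc (fun s => t s = k + 1) (Q i) := by
        rw [roundPref, if_pos hk]
      rw [hpref] at hacc
      rcases (trunc_acc_iff _ (Q i) x).1 hacc with ⟨htx, hQacc⟩
      exact h k (by omega) x htx hQacc

/-! ### Nash equilibrium outcomes of TDA are stable -/

lemma stable_of_nash (E : Prio I S) (t : S → ℕ) (hts : ∀ s, 1 ≤ t s)
    (hacyc : WithinTierAcyclic E t) (R : I → Pref S) {Q : I → Pref S}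
    (hQ : NashEq R (TDA E t) Q) : Stable E R (TDA E t Q) := by
  classical
  refine ⟨?_, ?_, ?_⟩
  · -- feasibility
    intro s
    rw [TDA_assigned E t Q s (hts s)]
    exact (DA_stable E _).1 s
  · -- individual rationality via the empty-list deviation
    intro i
    have hdev := hQ i (trunc (fun _ => False) (R i))
    have hnone : TDA E t (Function.update Q i (trunc (fun _ => False) (R i))) i = none := by
      unfold TDA
      apply TDAaux_none_of
      intro m _ x _ hacc
      rw [Function.update_self] at hacc
      exact absurd hacc (not_lt.2 (le_of_lt (truncFalse_unacc (R i) x)))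
    rw [hnone] at hdev
    exact hdev
  · -- no blocking pair
    intro i s hB
    obtain ⟨hpref, hcond⟩ := hB
    have hκ1 : 1 ≤ t s := hts s
    have hκsup : t s ≤ Finset.univ.sup t := Finset.le_sup (Finset.mem_univ s)
    set Qi' := onlyO (some s) (R i) with hQi'def
    set Q' := Function.update Q i Qi' with hQ'def
    have hQ'i : Q' i = Qi' := Function.update_self i Qi' Q
    have hQ'j : ∀ j, j ≠ i → Q' j = Q j := fun j hj => Function.update_of_ne hj _ _
    -- (1) under the deviation the deviator ends unmatched
    have hout : TDA E t Q' i = none := by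
      cases hx : TDA E t Q' i with
      | none => rfl
      | some x =>
        exfalso
        obtain ⟨_, _, _, _, hacc⟩ := TDAaux_tier E t Q' _ i x hx
        rw [hQ'i] at hacc
        have hxs : x = s :=
          (Option.some.inj ((onlyO_acc_iff (some s) (R i) x).1 hacc)).symm
        rw [hxs] at hx
        have hnash := hQ i Qi'
        rw [← hQ'def, hx] at hnash
        exact absurd hpref (not_lt.2 hnash)
    have hκnone : TDAaux E t Q' (t s) i = none := TDAaux_none_le E t Q' hκsup hout
    have hk₀none : TDAaux E t Q' (t s - 1) i = none :=
      TDAaux_none_le E t Q' (by omega) hout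
    -- round-κ DA of the deviated run leaves i unmatched
    have hν'i : DA E (roundPref E t Q' (t s - 1)) i = none := by
      have h1 : TDAaux E t Q' (t s - 1 + 1) i = DA E (roundPref E t Q' (t s - 1)) i :=
        TDAaux_succ_un E t Q' hk₀none
      have h2 : t s - 1 + 1 = t s := by omega
      rw [h2] at h1
      rw [← h1]
      exact hκnone
    have hrPi : roundPref E t Q' (t s - 1) i
        = trunc (fun x => t x = t s - 1 + 1) (Q' i) := by
      rw [roundPref, if_pos hk₀none]
    have hacc_i : (roundPref E t Q' (t s - 1) i).rank (some s) <
        (roundPref E t Q' (t s - 1) i).rank none := by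
      rw [hrPi, hQ'i, hQi'def]
      rw [trunc_rank_pos (fun x => t x = t s - 1 + 1) (onlyO (some s) (R i))
        (show t s = t s - 1 + 1 by omega), trunc_rank_none (fun x => t x = t s - 1 + 1),
        onlyO_rank_self, onlyO_rank_none_of_some]
      omega
    have hν'stable := DA_stable E (roundPref E t Q' (t s - 1))
    have hnb := hν'stable.2.2 i s
    have hν'full : (assigned (DA E (roundPref E t Q' (t s - 1))) s).card = E.quota s := by
      rcases lt_or_ge ((assigned (DA E (roundPref E t Q' (t s - 1))) s).card)
          (E.quota s) with h | h
      · exact absurd ⟨by rw [hν'i]; exact hacc_i, Or.inl h⟩ hnb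
      · exact le_antisymm (hν'stable.1 s) h
    have hν'hi : ∀ j ∈ assigned (DA E (roundPref E t Q' (t s - 1))) s, E.higher s j i := by
      intro j hj
      have hνj : DA E (roundPref E t Q' (t s - 1)) j = some s := (Finset.mem_filter.1 hj).2
      have hji : j ≠ i := by
        intro h
        rw [h, hν'i] at hνj
        exact nomatch hνj
      refine higher_total E (fun h => hji h.symm) ?_
      intro hij
      exact hnb ⟨by rw [hν'i]; exact hacc_i, Or.inr ⟨j, hνj, hij⟩⟩
    -- (5) population monotonicity across the first κ - 1 rounds
    have hF1 : ∀ k, k ≤ t s - 1 → ∀ j, j ≠ i → TDAaux E t Q k j ≠ none →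
        TDAaux E t Q' k j ≠ none := by
      intro k
      induction k with
      | zero => intro _ j _ h; exact absurd rfl h
      | succ k ih =>
        intro hk j hj h
        by_cases h2 : TDAaux E t Q' k j = none
        · by_cases h1 : TDAaux E t Q k j = none
          · rw [TDAaux_succ_un E t Q h1] at h
            have hsub : ∀ l, roundPref E t Q' k l = roundPref E t Q k l ∨
                Unacc (roundPref E t Q' k l) := by
              intro l
              by_cases hl : l = i
              · right
                rw [hl]
                have hlact : TDAaux E t Q' k i = none :=
                  TDAaux_none_le E t Q' (by omega) hout
                rw [roundPref, if_pos hlact, hQ'i, hQi'def]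
                apply trunc_unacc
                intro x htx
                have hxs : x ≠ s := by
                  intro hh
                  rw [hh] at htx
                  omega
                rw [onlyO_rank_none_of_some,
                  onlyO_rank_other (some s) (R i) (by simp [hxs]) (by simp)]
                omega
              · by_cases hl2 : TDAaux E t Q' k l = none
                · left
                  have hl3 : TDAaux E t Q k l = none := by
                    by_contra hc
                    exact (ih (by omega) l hl hc) hl2
                  rw [roundPref, roundPref, if_pos hl2, if_pos hl3, hQ'j l hl]
                · right
                  rw [roundPref, if_neg hl2]
                  exact truncFalse_unacc _
            have hjPeq : roundPref E t Q' k j = roundPref E t Q k j := by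
              rw [roundPref, roundPref, if_pos h2, if_pos h1, hQ'j j hj]
            cases hDx : DA E (roundPref E t Q k) j with
            | none => exact absurd hDx h
            | some x =>
              have hcs := DA_CS E (roundPref E t Q' k) hsub
                (DA_stable E (roundPref E t Q k)) hjPeq
              rw [hDx] at hcs
              have hxacc := stable_matched_acc E (DA_stable E (roundPref E t Q k)) hDx
              intro hcon
              rw [TDAaux_succ_un E t Q' h2] at hcon
              rw [hcon] at hcs
              omega
          · exact absurd h2 (ih (by omega) j hj h1)
        · intro hcon
          exact h2 (TDAaux_none_le E t Q' (by omega) hcon)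
    -- (6) the emptied round-κ profile
    set π := Function.update (roundPref E t Q' (t s - 1)) i (trunc (fun _ => False) (R i))
      with hπdef
    have hπi : Unacc (π i) := by
      rw [hπdef, Function.update_self]
      exact truncFalse_unacc _
    have hπne : ∀ l, l ≠ i → π l = roundPref E t Q' (t s - 1) l :=
      fun l hl => Function.update_of_ne hl _ _
    have hsub1 : ∀ l, π l = roundPref E t Q (t s - 1) l ∨ Unacc (π l) := by
      intro l
      by_cases hl : l = i
      · right
        rw [hl]
        exact hπi
      · rw [hπne l hl]
        by_cases hl2 : TDAaux E t Q' (t s - 1) l = none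
        · left
          have hl3 : TDAaux E t Q (t s - 1) l = none := by
            by_contra hc
            exact (hF1 (t s - 1) le_rfl l hl hc) hl2
          rw [roundPref, roundPref, if_pos hl2, if_pos hl3, hQ'j l hl]
        · right
          rw [roundPref, if_neg hl2]
          exact truncFalse_unacc _
    have hA : ∀ (j : I) (x : S), (π j).rank (some x) < (π j).rank none →
        t x = t s - 1 + 1 := by
      intro j x hacc
      by_cases hj : j = i
      · rw [hj] at hacc
        exact absurd hacc (not_lt.2 (le_of_lt (hπi x)))
      · rw [hπne j hj, roundPref] at hacc
        split at hacc
        · exact ((trunc_acc_iff _ _ x).1 hacc).1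
        · exact absurd hacc (not_lt.2 (le_of_lt (truncFalse_unacc _ x)))
    have hKey := keyK E (A := fun x => t x = t s - 1 + 1) (hacyc (t s - 1 + 1)) hA
      (show t s = t s - 1 + 1 by omega) hπi hπne hν'i hν'full hν'hi
    have hcut := DA_cut E hsub1 s i hKey.1 hKey.2
    have hμs : assigned (TDA E t Q) s = assigned (DA E (roundPref E t Q (t s - 1))) s :=
      TDA_assigned E t Q s hκ1
    rcases hcond with h | ⟨j, hj, hij⟩
    · rw [hμs] at h
      omega
    · have hjmem : j ∈ assigned (TDA E t Q) s :=
        Finset.mem_filter.2 ⟨Finset.mem_univ _, hj⟩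
      rw [hμs] at hjmem
      have h2 := hcut.2 j hjmem
      unfold Prio.higher at h2 hij
      omega

/-! ### Stable matchings are Nash equilibrium outcomes of TDA -/

lemma one_le_bnd (p : Pref S) : 1 ≤ bnd p := Nat.succ_le_succ (Nat.zero_le _)

lemma nash_of_stable (E : Prio I S) (t : S → ℕ) (hts : ∀ s, 1 ≤ t s) (R : I → Pref S)
    {μ : Matching I S} (hμ : Stable E R μ) : NashOutcome R (TDA E t) μ := by
  classical
  set Q : I → Pref S := fun j => onlyO (μ j) (R j) with hQdef
  have hQ0 : ∀ j, (Q j).rank (μ j) = 0 := fun j => onlyO_rank_self (μ j) (R j)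
  have hQn1 : ∀ j x, μ j = some x → (Q j).rank none = 1 := by
    intro j x hj
    show (onlyO (μ j) (R j)).rank none = 1
    rw [hj]
    exact onlyO_rank_none_of_some x (R j)
  have hQn0 : ∀ j, μ j = none → (Q j).rank none = 0 := by
    intro j hj
    show (onlyO (μ j) (R j)).rank none = 0
    rw [hj]
    exact onlyO_rank_self none (R j)
  have hQoth : ∀ j x, μ j ≠ some x → (Q j).rank (some x) = (R j).rank (some x) + 2 := by
    intro j x hj
    exact onlyO_rank_other (μ j) (R j) (fun h => hj h.symm) (by simp)
  have hQacc : ∀ j x, ((Q j).rank (some x) < (Q j).rank none ↔ μ j = some x) :=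
    fun j x => onlyO_acc_iff (μ j) (R j) x
  -- the on-path computation of all rounds
  have hpath : ∀ k, TDAaux E t Q k
      = fun j => (μ j).bind (fun x => if t x ≤ k then some x else none) := by
    intro k
    induction k with
    | zero =>
      funext j
      cases hj : μ j with
      | none => rw [Option.bind_none]; rfl
      | some x =>
        rw [Option.bind_some, if_neg (by have := hts x; omega)]
        rfl
    | succ k ih =>
      -- the target of round k+1
      have hrankn0 : ∀ j, μ j = none →
          (roundPref E t Q k j).rank none = 0 := by
        intro j hj
        have hact : TDAaux E t Q k j = none := by
          rw [congrFun ih j, hj, Option.bind_none]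
        rw [roundPref, if_pos hact, trunc_rank_none]
        exact hQn0 j hj
      have hPlow : ∀ j x, μ j = some x → t x ≤ k →
          roundPref E t Q k j = trunc (fun _ => False) (Q j) := by
        intro j x hj hx
        have hact : TDAaux E t Q k j = some x := by
          rw [congrFun ih j, hj, Option.bind_some, if_pos hx]
        rw [roundPref, if_neg (by rw [hact]; exact fun h => nomatch h)]
      have hPhigh : ∀ j x, μ j = some x → ¬ t x ≤ k →
          roundPref E t Q k j = trunc (fun y => t y = k + 1) (Q j) := by
        intro j x hj hx
        have hact : TDAaux E t Q k j = none := by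
          rw [congrFun ih j, hj, Option.bind_some, if_neg hx]
        rw [roundPref, if_pos hact]
      have hPnone : ∀ j, μ j = none →
          roundPref E t Q k j = trunc (fun y => t y = k + 1) (Q j) := by
        intro j hj
        have hact : TDAaux E t Q k j = none := by
          rw [congrFun ih j, hj, Option.bind_none]
        rw [roundPref, if_pos hact]
      -- ranks of an active, later-tier student: everything costs at least 1
      have hrank1 : ∀ j x, μ j = some x → ¬ t x ≤ k → t x ≠ k + 1 →
          (roundPref E t Q k j).rank none = 1 ∧
          ∀ y, 1 ≤ (roundPref E t Q k j).rank (some y) := by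
        intro j x hj hx hx2
        rw [hPhigh j x hj hx]
        constructor
        · rw [trunc_rank_none]
          exact hQn1 j x hj
        · intro y
          by_cases hy : t y = k + 1
          · rw [trunc_rank_pos (fun y => t y = k + 1) (Q j) hy]
            have hyx : μ j ≠ some y := by
              intro hh
              rw [hj] at hh
              rw [Option.some.inj hh] at hx2
              exact hx2 hy
            rw [hQoth j y hyx]
            omega
          · rw [trunc_rank_neg (fun y => t y = k + 1) (Q j) hy]
            have := one_le_bnd (Q j)
            omega
      set νk1 : Matching I S :=
        fun j => (μ j).bind (fun x => if t x = k + 1 then some x else none) with hνk1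
      have hν_some : ∀ j x, νk1 j = some x → μ j = some x ∧ t x = k + 1 := by
        intro j x h
        cases hj : μ j with
        | none =>
          rw [hνk1] at h
          simp only [hj, Option.bind_none] at h
          exact nomatch h
        | some y =>
          rw [hνk1] at h
          simp only [hj, Option.bind_some] at h
          by_cases hy : t y = k + 1
          · rw [if_pos hy] at h
            have hxy : y = x := Option.some.inj h
            exact ⟨congrArg some hxy, by rw [← hxy]; exact hy⟩
          · rw [if_neg hy] at h
            exact nomatch h
      have hν_tier : ∀ j x, μ j = some x → t x = k + 1 → νk1 j = some x := by
        intro j x hj hx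
        rw [hνk1]
        simp only [hj, Option.bind_some, if_pos hx]
      have hν_none : ∀ j x, μ j = some x → t x ≠ k + 1 → νk1 j = none := by
        intro j x hj hx
        rw [hνk1]
        simp only [hj, Option.bind_some, if_neg hx]
      have hν_nonen : ∀ j, μ j = none → νk1 j = none := by
        intro j hj
        rw [hνk1]
        simp only [hj, Option.bind_none]
      -- νk1 is the student-optimal stable matching of the round economy
      have hSO : StudentOptimal E (roundPref E t Q k) νk1 := by
        refine ⟨⟨?_, ?_, ?_⟩, ?_⟩
        · -- feasible
          intro x
          have hsub : assigned νk1 x ⊆ assigned μ x := by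
            intro j hjm
            have h := (Finset.mem_filter.1 hjm).2
            exact Finset.mem_filter.2 ⟨Finset.mem_univ _, (hν_some j x h).1⟩
          exact le_trans (Finset.card_le_card hsub) (hμ.1 x)
        · -- IR
          intro j
          cases hj : μ j with
          | none =>
            rw [hν_nonen j hj]
          | some x =>
            by_cases hx : t x ≤ k
            · rw [hν_none j x hj (by omega)]
            · by_cases hx2 : t x = k + 1
              · rw [hν_tier j x hj hx2, hPhigh j x hj hx,
                  trunc_rank_pos (fun y => t y = k + 1) (Q j) hx2,
                  trunc_rank_none (fun y => t y = k + 1) (Q j)]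
                have h0 : (Q j).rank (some x) = 0 := by
                  have := hQ0 j
                  rw [hj] at this
                  exact this
                rw [h0]
                exact Nat.zero_le _
              · rw [hν_none j x hj hx2]
        · -- no blocking pairs (the preference condition is always violated)
          rintro j x ⟨hb1, _⟩
          cases hj : μ j with
          | none =>
            rw [hν_nonen j hj] at hb1
            rw [hrankn0 j hj] at hb1
            omega
          | some y =>
            by_cases hy : t y ≤ k
            · rw [hν_none j y hj (by omega), hPlow j y hj hy] at hb1
              have := truncFalse_unacc (Q j) x
              omega
            · by_cases hy2 : t y = k + 1
              · rw [hν_tier j y hj hy2, hPhigh j y hj hy, trunc_rank_pos (fun y => t y = k + 1) (Q j) hy2] at hb1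
                have h0 : (Q j).rank (some y) = 0 := by
                  have := hQ0 j
                  rw [hj] at this
                  exact this
                rw [h0] at hb1
                omega
              · obtain ⟨hn1, hs1⟩ := hrank1 j y hj hy hy2
                rw [hν_none j y hj hy2, hn1] at hb1
                have := hs1 x
                omega
        · -- student optimality
          intro ν hν j
          cases hj : μ j with
          | none =>
            rw [hν_nonen j hj, hrankn0 j hj]
            exact Nat.zero_le _
          | some x =>
            by_cases hx : t x ≤ k
            · rw [hν_none j x hj (by omega)]
              have hun : ν j = none :=
                stable_unacc_none E hν (by rw [hPlow j x hj hx]; exact truncFalse_unacc _)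
              rw [hun]
            · by_cases hx2 : t x = k + 1
              · rw [hν_tier j x hj hx2, hPhigh j x hj hx, trunc_rank_pos (fun y => t y = k + 1) (Q j) hx2]
                have h0 : (Q j).rank (some x) = 0 := by
                  have := hQ0 j
                  rw [hj] at this
                  exact this
                rw [h0]
                exact Nat.zero_le _
              · obtain ⟨hn1, hs1⟩ := hrank1 j x hj hx hx2
                rw [hν_none j x hj hx2, hn1]
                cases hνj : ν j with
                | none => exact le_of_eq hn1.symm
                | some y => exact hs1 y
      have hDA : DA E (roundPref E t Q k) = νk1 :=
        SO_unique E (roundPref E t Q k) (DA_SO E _) hSO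
      funext j
      cases hj : μ j with
      | none =>
        have hact : TDAaux E t Q k j = none := by
          rw [congrFun ih j, hj, Option.bind_none]
        rw [TDAaux_succ_un E t Q hact, hDA, hν_nonen j hj, Option.bind_none]
      | some x =>
        by_cases hx : t x ≤ k
        · have hact : TDAaux E t Q k j = some x := by
            rw [congrFun ih j, hj, Option.bind_some, if_pos hx]
          rw [TDAaux_succ_matched E t Q hact, Option.bind_some, if_pos (by omega)]
        · have hact : TDAaux E t Q k j = none := by
            rw [congrFun ih j, hj, Option.bind_some, if_neg hx]
          rw [TDAaux_succ_un E t Q hact, hDA, Option.bind_some]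
          by_cases hx2 : t x = k + 1
          · rw [hν_tier j x hj hx2, if_pos (by omega)]
          · rw [hν_none j x hj hx2, if_neg (by omega)]
  -- hence TDA on path is μ
  have hTDA : TDA E t Q = μ := by
    unfold TDA
    rw [hpath]
    funext j
    cases hj : μ j with
    | none => rw [Option.bind_none]
    | some x =>
      rw [Option.bind_some, if_pos (Finset.le_sup (Finset.mem_univ x))]
  refine ⟨Q, ?_, hTDA⟩
  -- Nash equilibrium property
  intro i Qi'
  rw [hTDA]
  set Q' := Function.update Q i Qi' with hQ'def
  have hQ'j : ∀ j, j ≠ i → Q' j = Q j := fun j hj => Function.update_of_ne hj _ _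
  -- honest students only ever receive their μ-school
  have hB1 : ∀ k j, j ≠ i → ∀ x, TDAaux E t Q' k j = some x → μ j = some x := by
    intro k
    induction k with
    | zero => intro j _ x h; exact nomatch h
    | succ k ih =>
      intro j hj x h
      cases hx : TDAaux E t Q' k j with
      | some y =>
        rw [TDAaux_succ_matched E t Q' hx] at h
        have hxy : y = x := Option.some.inj h
        rw [← hxy]
        exact ih j hj y hx
      | none =>
        rw [TDAaux_succ_un E t Q' hx] at h
        have hacc := stable_matched_acc E (DA_stable E (roundPref E t Q' k)) h
        have hP : roundPref E t Q' k j = trunc (fun y => t y = k + 1) (Q j) := by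
          rw [roundPref, if_pos hx, hQ'j j hj]
        rw [hP] at hacc
        exact (hQacc j x).1 ((trunc_acc_iff _ _ x).1 hacc).2
  cases hout : TDA E t Q' i with
  | none =>
    exact hμ.2.1 i
  | some s' =>
    by_contra hcon
    push_neg at hcon
    unfold TDA at hout
    obtain ⟨h1κ, hκsup, hk₀, hDAi, _⟩ := TDAaux_tier E t Q' _ i s' hout
    have hnb := hμ.2.2 i s'
    have hfull : E.quota s' ≤ (assigned μ s').card := by
      by_contra h
      push_neg at h
      exact hnb ⟨hcon, Or.inl h⟩
    have henvy : ∀ j, μ j = some s' → ¬ E.higher s' i j :=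
      fun j hj hij => hnb ⟨hcon, Or.inr ⟨j, hj, hij⟩⟩
    have hμi : μ i ≠ some s' := by
      intro h
      rw [h] at hcon
      omega
    have hiassigned : i ∉ assigned μ s' := fun h => hμi (Finset.mem_filter.1 h).2
    have hwst := DA_stable E (roundPref E t Q' (t s' - 1))
    obtain ⟨j₀, hj₀μ, hj₀ν⟩ : ∃ j₀ ∈ assigned μ s',
        DA E (roundPref E t Q' (t s' - 1)) j₀ ≠ some s' := by
      by_contra hcontra
      push_neg at hcontra
      have hsub : insert i (assigned μ s') ⊆
          assigned (DA E (roundPref E t Q' (t s' - 1))) s' := by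
        intro l hl
        rcases Finset.mem_insert.1 hl with rfl | hl
        · exact Finset.mem_filter.2 ⟨Finset.mem_univ _, hDAi⟩
        · exact Finset.mem_filter.2 ⟨Finset.mem_univ _, hcontra l hl⟩
      have hcard := Finset.card_le_card hsub
      rw [Finset.card_insert_of_notMem hiassigned] at hcard
      have := hwst.1 s'
      omega
    have hμj₀ : μ j₀ = some s' := (Finset.mem_filter.1 hj₀μ).2
    have hj₀i : j₀ ≠ i := by
      intro h
      rw [h] at hμj₀
      exact hμi hμj₀
    -- j₀ is still unmatched entering round t s'
    have hj₀act : TDAaux E t Q' (t s' - 1) j₀ = none := by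
      cases hx : TDAaux E t Q' (t s' - 1) j₀ with
      | none => rfl
      | some x =>
        exfalso
        have hμx : μ j₀ = some x := hB1 _ j₀ hj₀i x hx
        rw [hμj₀] at hμx
        obtain ⟨_, hle, _, _, _⟩ := TDAaux_tier E t Q' _ j₀ x hx
        rw [← Option.some.inj hμx] at hle
        omega
    have hPj₀ : roundPref E t Q' (t s' - 1) j₀
        = trunc (fun y => t y = t s' - 1 + 1) (Q j₀) := by
      rw [roundPref, if_pos hj₀act, hQ'j j₀ hj₀i]
    have hr0 : (roundPref E t Q' (t s' - 1) j₀).rank (some s') = 0 := by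
      rw [hPj₀, trunc_rank_pos (fun y => t y = t s' - 1 + 1) (Q j₀) (show t s' = t s' - 1 + 1 by omega)]
      have := hQ0 j₀
      rw [hμj₀] at this
      exact this
    have hrn : (roundPref E t Q' (t s' - 1) j₀).rank none = 1 := by
      rw [hPj₀, trunc_rank_none]
      exact hQn1 j₀ s' hμj₀
    have hwj₀ : DA E (roundPref E t Q' (t s' - 1)) j₀ = none := by
      cases hx : DA E (roundPref E t Q' (t s' - 1)) j₀ with
      | none => rfl
      | some x =>
        exfalso
        have hacc := stable_matched_acc E hwst hx
        rw [hPj₀] at hacc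
        have hμx : μ j₀ = some x := (hQacc j₀ x).1 ((trunc_acc_iff _ _ x).1 hacc).2
        rw [hμj₀] at hμx
        rw [← Option.some.inj hμx] at hx
        exact hj₀ν hx
    -- (j₀, s') blocks the round matching: contradiction
    apply hwst.2.2 j₀ s'
    refine ⟨?_, Or.inr ⟨i, hDAi, ?_⟩⟩
    · rw [hwj₀, hr0, hrn]
      omega
    · exact higher_total E (fun h => hj₀i h.symm) (henvy j₀ hμj₀)

lemma nashOutcome_iff_stable (E : Prio I S) (t : S → ℕ) (T : ℕ) (ht : IsTierStructure t T)
    (hacyc : WithinTierAcyclic E t) (R : I → Pref S) (μ : Matching I S) :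
    NashOutcome R (TDA E t) μ ↔ Stable E R μ := by
  constructor
  · rintro ⟨Q, hQ, rfl⟩
    exact stable_of_nash E t (fun s => (ht.1 s).1) hacyc R hQ
  · exact nash_of_stable E t (fun s => (ht.1 s).1) R

end DAalg

/-- If `(q, ≿, t)` and `(q, ≿, t')` are both within-tier acyclic, then
for every preference profile the Nash equilibrium outcome sets of TDA under `t` and under
`t'` coincide, and both equal the set of stable matchings. -/
theorem withinTierAcyclic_TDA_outcomes_coincide
    (E : Prio I S) (t t' : S → ℕ) (T T' : ℕ)
    (ht : IsTierStructure t T) (ht' : IsTierStructure t' T')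
    (h1 : WithinTierAcyclic E t) (h2 : WithinTierAcyclic E t')
    (R : I → Pref S) :
    (∀ μ, NashOutcome R (TDA E t) μ ↔ Stable E R μ) ∧
    (∀ μ, NashOutcome R (TDA E t') μ ↔ Stable E R μ) :=
  ⟨fun μ => nashOutcome_iff_stable E t T ht h1 R μ,
   fun μ => nashOutcome_iff_stable E t' T' ht' h2 R μ⟩

end SchoolChoice
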